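/- Let T_i and T_{n+1} be commuting uniformly bounded C₀-semigroups on a Banach space X with generators A_i and A_{n+1}, and suppose A_i − A_{n+1} extends to a bounded operator. Then for every x in the common domain and every u_i > 0: (1/2)∫_{−u_i}^{u_i} T_i((u_i+w)/2) T_{n+1}((u_i−w)/2)(A_i − A_{n+1}) x dw = (T_i(u_i) − T_{n+1}(u_i)) x. -/

import Mathlib

open MeasureTheory Filter Set

variable {X : Type*} [NormedAddCommGroup X] [NormedSpace ℂ X] [CompleteSpace X]

/-- A (not necessarily bounded) one-parameter `C₀`-semigroup on `X`. -/
def IsC0 (T : ℝ → X →L[ℂ] X) : Prop :=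
  T 0 = 1 ∧ (∀ s t : ℝ, 0 ≤ s → 0 ≤ t → T (s + t) = T s ∘L T t) ∧
    ∀ x : X, ContinuousOn (fun t => T t x) (Set.Ici 0)

/-- `A` (a partially defined linear map) is the infinitesimal generator of the
semigroup `T`: its domain is exactly the set of `x` for which the difference
quotient converges, and on the domain `A x` is its limit. -/
def IsGen (T : ℝ → X →L[ℂ] X) (A : X →ₗ.[ℂ] X) : Prop :=
  (∀ x : X, x ∈ A.domain ↔
      ∃ y : X, Tendsto (fun t : ℝ => (t : ℂ)⁻¹ • (T t x - x)) (nhdsWithin 0 (Set.Ioi 0)) (nhds y)) ∧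
    ∀ x : A.domain,
      Tendsto (fun t : ℝ => (t : ℂ)⁻¹ • (T t (x : X) - (x : X))) (nhdsWithin 0 (Set.Ioi 0)) (nhds (A x))

theorem aux_move (T : ℝ → X →L[ℂ] X) (hT : IsC0 T) (M : ℝ)
    (hM : ∀ t : ℝ, 0 ≤ t → ‖T t‖ ≤ M)
    {ι : Type*} {l : Filter ι} {a : ι → ℝ} {t : ℝ} (ht : 0 ≤ t)
    (ha : Tendsto a l (nhds t)) (ha' : ∀ᶠ i in l, 0 ≤ a i)
    {y : ι → X} {z : X} (hy : Tendsto y l (nhds z)) :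
    Tendsto (fun i => T (a i) (y i)) l (nhds (T t z)) := by
  have h1 : Tendsto (fun i => T (a i) z) l (nhds (T t z)) := by
    have hc : Tendsto (fun s => T s z) (nhdsWithin t (Ici 0)) (nhds (T t z)) :=
      hT.2.2 z t ht
    exact hc.comp (tendsto_nhdsWithin_iff.mpr ⟨ha, ha'⟩)
  have h0 : Tendsto (fun i => T (a i) (y i) - T (a i) z) l (nhds 0) := by
    have hb : Tendsto (fun i => M * ‖y i - z‖) l (nhds 0) := by
      have h2 : Tendsto (fun i => ‖y i - z‖) l (nhds 0) :=
        tendsto_iff_norm_sub_tendsto_zero.mp hy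
      simpa using h2.const_mul M
    apply squeeze_zero_norm' _ hb
    filter_upwards [ha'] with i hi
    calc ‖T (a i) (y i) - T (a i) z‖ = ‖T (a i) (y i - z)‖ := by rw [map_sub]
      _ ≤ ‖T (a i)‖ * ‖y i - z‖ := (T (a i)).le_opNorm _
      _ ≤ M * ‖y i - z‖ := by gcongr; exact hM _ hi
  have h3 := h0.add h1
  simpa using h3

theorem aux_gen_real (T : ℝ → X →L[ℂ] X) (A : X →ₗ.[ℂ] X) (hA : IsGen T A)
    (x : A.domain) :
    Tendsto (fun t : ℝ => t⁻¹ • (T t (x : X) - (x : X))) (nhdsWithin 0 (Ioi 0)) (nhds (A x)) := by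
  refine (hA.2 x).congr fun t => ?_
  rw [← Complex.coe_smul, Complex.ofReal_inv]

theorem aux_orbit_deriv (T : ℝ → X →L[ℂ] X) (hT : IsC0 T) (M : ℝ)
    (hM : ∀ t : ℝ, 0 ≤ t → ‖T t‖ ≤ M) (A : X →ₗ.[ℂ] X) (hA : IsGen T A)
    (x : A.domain) {t : ℝ} (ht : 0 < t) :
    HasDerivAt (fun s => T s (x : X)) (T t (A x)) t := by
  have hgen := aux_gen_real T A hA x
  rw [hasDerivAt_iff_tendsto_slope, ← nhdsLT_sup_nhdsGT, tendsto_sup]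
  constructor
  · -- left limit
    have hy : Tendsto (fun s => (t - s)⁻¹ • (T (t - s) (x : X) - (x : X)))
        (nhdsWithin t (Iio t)) (nhds (A x)) := by
      apply hgen.comp
      rw [tendsto_nhdsWithin_iff]
      constructor
      · have : Tendsto (fun s : ℝ => t - s) (nhds t) (nhds (t - t)) :=
          (continuous_const.sub continuous_id).tendsto t
        simpa using this.mono_left nhdsWithin_le_nhds
      · filter_upwards [eventually_mem_nhdsWithin] with s hs
        simpa using sub_pos.mpr (mem_Iio.mp hs)
    have hpos : ∀ᶠ s in nhdsWithin t (Iio t), 0 < s :=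
      (eventually_gt_nhds ht).filter_mono nhdsWithin_le_nhds
    have hmove := aux_move T hT M hM ht.le
      (tendsto_id.mono_right nhdsWithin_le_nhds)
      (hpos.mono fun s hs => hs.le) hy
    refine hmove.congr' ?_
    filter_upwards [hpos, eventually_mem_nhdsWithin] with s hs hs'
    have hsemi : T t = T s ∘L T (t - s) := by
      have h2 := hT.2.1 s (t - s) hs.le (by simpa using (hs' : s < t).le)
      simpa using h2
    have key : T t (x : X) = T s (T (t - s) (x : X)) := by rw [hsemi]; rfl
    show T s ((t - s)⁻¹ • (T (t - s) (x : X) - (x : X))) = slope (fun s' => T s' (x : X)) t s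
    rw [slope_def_module, (T s).map_smul_of_tower, map_sub, key]
    have hinv : (s - t)⁻¹ = -(t - s)⁻¹ := by rw [← neg_sub t s, inv_neg]
    rw [hinv, neg_smul, smul_sub, smul_sub]
    abel
  · -- right limit
    have hy : Tendsto (fun s => (s - t)⁻¹ • (T (s - t) (x : X) - (x : X)))
        (nhdsWithin t (Ioi t)) (nhds (A x)) := by
      apply hgen.comp
      rw [tendsto_nhdsWithin_iff]
      constructor
      · have : Tendsto (fun s : ℝ => s - t) (nhds t) (nhds (t - t)) :=
          (continuous_id.sub continuous_const).tendsto t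
        simpa using this.mono_left nhdsWithin_le_nhds
      · filter_upwards [eventually_mem_nhdsWithin] with s hs
        simpa using sub_pos.mpr (mem_Ioi.mp hs)
    have hmove := ((T t).continuous.tendsto _).comp hy
    refine hmove.congr' ?_
    filter_upwards [eventually_mem_nhdsWithin] with s hs
    have hsemi : T s = T t ∘L T (s - t) := by
      have h2 := hT.2.1 t (s - t) ht.le (by simpa using (hs : t < s).le)
      simpa using h2
    have key : T s (x : X) = T t (T (s - t) (x : X)) := by rw [hsemi]; rfl
    show T t ((s - t)⁻¹ • (T (s - t) (x : X) - (x : X))) = slope (fun s' => T s' (x : X)) t s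
    rw [slope_def_module, (T t).map_smul_of_tower, map_sub, key]

theorem aux_commute (Ti Tn : ℝ → X →L[ℂ] X)
    (hcomm : ∀ s t : ℝ, Ti s ∘L Tn t = Tn t ∘L Ti s)
    (Ai : X →ₗ.[ℂ] X) (hAi : IsGen Ti Ai)
    (x : X) (hx : x ∈ Ai.domain) (b : ℝ) :
    ∃ h : Tn b x ∈ Ai.domain, Ai ⟨Tn b x, h⟩ = Tn b (Ai ⟨x, hx⟩) := by
  have key : Tendsto (fun t : ℝ => (t : ℂ)⁻¹ • (Ti t (Tn b x) - Tn b x))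
      (nhdsWithin 0 (Ioi 0)) (nhds (Tn b (Ai ⟨x, hx⟩))) := by
    have h1 := ((Tn b).continuous.tendsto _).comp (hAi.2 ⟨x, hx⟩)
    refine h1.congr fun t => ?_
    have hcx : Ti t (Tn b x) = Tn b (Ti t x) := by
      have h2 := DFunLike.congr_fun (hcomm t b) x
      simpa using h2
    show Tn b ((t : ℂ)⁻¹ • (Ti t x - x)) = (t : ℂ)⁻¹ • (Ti t (Tn b x) - Tn b x)
    rw [(Tn b).map_smul, map_sub, hcx]
  have hmem : Tn b x ∈ Ai.domain := (hAi.1 _).mpr ⟨_, key⟩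
  exact ⟨hmem, tendsto_nhds_unique (hAi.2 ⟨_, hmem⟩) key⟩

/-- for commuting uniformly bounded `C₀`-semigroups `T_i`, `T_{n+1}`
with generators `A_i`, `A_{n+1}` whose difference extends to a bounded operator `C`,
`(1/2)∫_{−u}^{u} T_i((u+w)/2) T_{n+1}((u−w)/2) C x dw = T_i(u)x − T_{n+1}(u)x`
for `x` in the common domain and `u > 0`. -/
theorem semigroup_difference_integral
    (Ti Tn : ℝ → X →L[ℂ] X) (hTi : IsC0 Ti) (hTn : IsC0 Tn)
    (M : ℝ) (hM : ∀ t : ℝ, 0 ≤ t → ‖Ti t‖ ≤ M ∧ ‖Tn t‖ ≤ M)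
    (hcomm : ∀ s t : ℝ, Ti s ∘L Tn t = Tn t ∘L Ti s)
    (Ai An : X →ₗ.[ℂ] X) (hAi : IsGen Ti Ai) (hAn : IsGen Tn An)
    (C : X →L[ℂ] X)
    (hC : ∀ x (hxi : x ∈ Ai.domain) (hxn : x ∈ An.domain),
      C x = Ai ⟨x, hxi⟩ - An ⟨x, hxn⟩)
    (x : X) (hxi : x ∈ Ai.domain) (hxn : x ∈ An.domain)
    (u : ℝ) (hu : 0 < u) :
    ((2 : ℂ)⁻¹) • (∫ w in (-u)..u, Ti ((u + w) / 2) (Tn ((u - w) / 2) (C x))) =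
      Ti u x - Tn u x := by
  have hMi : ∀ t : ℝ, 0 ≤ t → ‖Ti t‖ ≤ M := fun t ht => (hM t ht).1
  have hMn : ∀ t : ℝ, 0 ≤ t → ‖Tn t‖ ≤ M := fun t ht => (hM t ht).2
  -- continuity of the basic expression
  have hcont : ∀ y : X,
      ContinuousOn (fun w => Ti ((u + w) / 2) (Tn ((u - w) / 2) y)) (Icc (-u) u) := by
    intro y w0 hw0
    have ha0 : (0 : ℝ) ≤ (u + w0) / 2 := by obtain ⟨h1, h2⟩ := hw0; linarith
    have hb0 : (0 : ℝ) ≤ (u - w0) / 2 := by obtain ⟨h1, h2⟩ := hw0; linarith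
    have haw : ∀ᶠ w in nhdsWithin w0 (Icc (-u) u), 0 ≤ (u + w) / 2 := by
      filter_upwards [eventually_mem_nhdsWithin] with w hw
      obtain ⟨h1, h2⟩ := hw; linarith
    have hbw : ∀ᶠ w in nhdsWithin w0 (Icc (-u) u), 0 ≤ (u - w) / 2 := by
      filter_upwards [eventually_mem_nhdsWithin] with w hw
      obtain ⟨h1, h2⟩ := hw; linarith
    have hta : Tendsto (fun w => (u + w) / 2) (nhdsWithin w0 (Icc (-u) u))
        (nhds ((u + w0) / 2)) :=
      (((continuous_const.add continuous_id).div_const 2).tendsto w0).mono_left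
        nhdsWithin_le_nhds
    have htb : Tendsto (fun w => (u - w) / 2) (nhdsWithin w0 (Icc (-u) u))
        (nhds ((u - w0) / 2)) :=
      (((continuous_const.sub continuous_id).div_const 2).tendsto w0).mono_left
        nhdsWithin_le_nhds
    have hinner : Tendsto (fun w => Tn ((u - w) / 2) y) (nhdsWithin w0 (Icc (-u) u))
        (nhds (Tn ((u - w0) / 2) y)) :=
      aux_move Tn hTn M hMn hb0 htb hbw tendsto_const_nhds
    exact aux_move Ti hTi M hMi ha0 hta haw hinner
  -- derivative
  have hderiv : ∀ w0 ∈ Ioo (-u) u,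
      HasDerivAt (fun w => Ti ((u + w) / 2) (Tn ((u - w) / 2) x))
        ((2 : ℝ)⁻¹ • Ti ((u + w0) / 2) (Tn ((u - w0) / 2) (C x))) w0 := by
    intro w0 hw0
    obtain ⟨hw1, hw2⟩ := hw0
    have ha0 : 0 < (u + w0) / 2 := by linarith
    have hb0 : 0 < (u - w0) / 2 := by linarith
    obtain ⟨hmem, hval⟩ := aux_commute Ti Tn hcomm Ai hAi x hxi ((u - w0) / 2)
    have hda : HasDerivAt (fun w : ℝ => (u + w) / 2) (2⁻¹ : ℝ) w0 := by
      have := ((hasDerivAt_const w0 u).add (hasDerivAt_id w0)).div_const 2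
      simpa using this
    have hdb : HasDerivAt (fun w : ℝ => (u - w) / 2) (-(2⁻¹ : ℝ)) w0 := by
      have := ((hasDerivAt_const w0 u).sub (hasDerivAt_id w0)).div_const 2
      simpa [neg_div] using this
    -- r part
    have horbi := aux_orbit_deriv Ti hTi M hMi Ai hAi ⟨_, hmem⟩ ha0
    have hr : HasDerivAt (fun w => Ti ((u + w) / 2) (Tn ((u - w0) / 2) x))
        ((2 : ℝ)⁻¹ • Ti ((u + w0) / 2) (Tn ((u - w0) / 2) (Ai ⟨x, hxi⟩))) w0 := by
      have h2 := HasDerivAt.scomp w0 horbi hda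
      rw [hval] at h2
      simpa [Function.comp_def] using h2
    -- q : inner orbit for Tn
    have horbn := aux_orbit_deriv Tn hTn M hMn An hAn ⟨x, hxn⟩ hb0
    have hq : HasDerivAt (fun w => Tn ((u - w) / 2) x)
        (-((2 : ℝ)⁻¹ • Tn ((u - w0) / 2) (An ⟨x, hxn⟩))) w0 := by
      have h2 := HasDerivAt.scomp w0 horbn hdb
      simpa [Function.comp_def, neg_smul] using h2
    -- p part
    have hp : HasDerivAt
        (fun w => Ti ((u + w) / 2) (Tn ((u - w) / 2) x - Tn ((u - w0) / 2) x))
        (Ti ((u + w0) / 2) (-((2 : ℝ)⁻¹ • Tn ((u - w0) / 2) (An ⟨x, hxn⟩)))) w0 := by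
      rw [hasDerivAt_iff_tendsto_slope]
      have hq' := hasDerivAt_iff_tendsto_slope.mp hq
      have haw : ∀ᶠ w in nhdsWithin w0 {w0}ᶜ, 0 ≤ (u + w) / 2 := by
        have h3 : ∀ᶠ w in nhds w0, -u < w := eventually_gt_nhds hw1
        filter_upwards [h3.filter_mono nhdsWithin_le_nhds] with w hw
        linarith
      have hta : Tendsto (fun w => (u + w) / 2) (nhdsWithin w0 {w0}ᶜ)
          (nhds ((u + w0) / 2)) :=
        (((continuous_const.add continuous_id).div_const 2).tendsto w0).mono_left
          nhdsWithin_le_nhds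
      have hmove := aux_move Ti hTi M hMi ha0.le hta haw hq'
      refine hmove.congr fun w => ?_
      rw [slope_def_module, slope_def_module, (Ti ((u + w) / 2)).map_smul_of_tower]
      simp [sub_self]
    have hsum := hp.add hr
    have hEq : (fun w => Ti ((u + w) / 2) (Tn ((u - w) / 2) x)) =
        fun w => Ti ((u + w) / 2) (Tn ((u - w) / 2) x - Tn ((u - w0) / 2) x) +
          Ti ((u + w) / 2) (Tn ((u - w0) / 2) x) := by
      funext w
      rw [map_sub]
      abel
    have hval2 : Ti ((u + w0) / 2) (-((2 : ℝ)⁻¹ • Tn ((u - w0) / 2) (An ⟨x, hxn⟩))) +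
        (2 : ℝ)⁻¹ • Ti ((u + w0) / 2) (Tn ((u - w0) / 2) (Ai ⟨x, hxi⟩)) =
        (2 : ℝ)⁻¹ • Ti ((u + w0) / 2) (Tn ((u - w0) / 2) (C x)) := by
      rw [hC x hxi hxn, map_neg, (Ti ((u + w0) / 2)).map_smul_of_tower,
        (Tn ((u - w0) / 2)).map_sub, (Ti ((u + w0) / 2)).map_sub, smul_sub]
      abel
    rw [hEq, ← hval2]
    exact hsum
  -- integrability
  have hle : -u ≤ u := by linarith
  have hint : IntervalIntegrable
      (fun w => (2 : ℝ)⁻¹ • Ti ((u + w) / 2) (Tn ((u - w) / 2) (C x)))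
      volume (-u) u := by
    apply ContinuousOn.intervalIntegrable
    rw [uIcc_of_le hle]
    exact (hcont (C x)).const_smul _
  have hFTC := intervalIntegral.integral_eq_sub_of_hasDerivAt_of_le hle
    (hcont x) hderiv hint
  rw [intervalIntegral.integral_smul] at hFTC
  have hgu : Ti ((u + u) / 2) (Tn ((u - u) / 2) x) = Ti u x := by
    rw [show (u + u) / 2 = u by ring, show (u - u) / 2 = 0 by ring, hTn.1]
    rfl
  have hgmu : Ti ((u + -u) / 2) (Tn ((u - -u) / 2) x) = Tn u x := by
    rw [show (u + -u) / 2 = 0 by ring, show (u - -u) / 2 = u by ring, hTi.1]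
    rfl
  rw [hgu, hgmu] at hFTC
  rw [show ((2 : ℂ))⁻¹ = (((2 : ℝ)⁻¹ : ℝ) : ℂ) by norm_num, Complex.coe_smul]
  exact hFTC
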